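/- For all i ≠ j ∈ [−n,n]* and every m ∈ B, the element φ_{i,j}(m) = x_i Y_j[m] − x_j Y_i[m] − Y_j[X_i(m)] + Y_i[X_j(m)] of S₁ lies in the kernel of ∂₁. -/

import Mathlib

open scoped BigOperators

noncomputable section

namespace ToricBorderBasis

abbrev Exp (n : ℕ) := Fin n → ℤ

abbrev LaurentS (n : ℕ) (k : Type*) [Field k] : Type _ := AddMonoidAlgebra k (Exp n)

variable {k : Type*} [Field k] {n : ℕ}

def edeg {n : ℕ} (α : Exp n) : ℕ := ∑ i, (α i).natAbs

def mono (k : Type*) [Field k] {n : ℕ} (α : Exp n) : LaurentS n k :=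
  AddMonoidAlgebra.ofCoeff (Finsupp.single α 1)

def pdeg (p : LaurentS n k) : ℕ := (p.coeff : Exp n →₀ k).support.sup edeg

def expOf (n : ℕ) (i : Fin n) (s : Bool) : Exp n :=
  Pi.single i (if s then 1 else -1)

def varX (k : Type*) [Field k] {n : ℕ} (i : Fin n) (s : Bool) : LaurentS n k :=
  mono k (expOf n i s)

def Bx {n : ℕ} (B : Set (Exp n)) : Set (Exp n) :=
  B ∪ {β | ∃ i s, ∃ α ∈ B, β = expOf n i s + α}

def bord {n : ℕ} (B : Set (Exp n)) : Set (Exp n) := Bx B \ B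

def ConnectedToOne {n : ℕ} (B : Set (Exp n)) : Prop :=
  (0 : Exp n) ∈ B ∧ ∀ α ∈ B, α ≠ 0 →
    ∃ i s, ∃ α' ∈ B, α = expOf n i s + α' ∧ edeg α' < edeg α

def spanMon (k : Type*) [Field k] {n : ℕ} (A : Set (Exp n)) :
    Submodule k (LaurentS n k) :=
  Submodule.span k {p | ∃ α ∈ A, p = mono k α}

def Xop (π : LaurentS n k →ₗ[k] LaurentS n k) (i : Fin n) (s : Bool) :
    LaurentS n k →ₗ[k] LaurentS n k :=
  π ∘ₗ LinearMap.mulLeft k (varX k i s)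

/-- `π` is a projection from `⟨B^×⟩` onto `⟨B⟩`. -/
def IsProj (π : LaurentS n k →ₗ[k] LaurentS n k) (B : Set (Exp n)) : Prop :=
  (∀ p ∈ spanMon k (Bx B), π p ∈ spanMon k B) ∧ (∀ p ∈ spanMon k B, π p = p)

/-- The operators `X_i`, `i ∈ [−n,n]*`, pairwise commute on `⟨B⟩`. -/
def CommRelAll (π : LaurentS n k →ₗ[k] LaurentS n k) (B : Set (Exp n)) : Prop :=
  ∀ (i : Fin n) (s : Bool) (j : Fin n) (t : Bool), ∀ b ∈ spanMon k B,
    Xop π i s (Xop π j t b) = Xop π j t (Xop π i s b)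

/-- `X_i ∘ X_{−i} = Id` on `⟨B⟩` for every `i ∈ [−n,n]*`. -/
def InvRelAll (π : LaurentS n k →ₗ[k] LaurentS n k) (B : Set (Exp n)) : Prop :=
  ∀ (i : Fin n) (s : Bool), ∀ b ∈ spanMon k B, Xop π i s (Xop π i (!s) b) = b

/-- The rewriting family `F = {x^β − π(x^β) : x^β ∈ ∂B}`. -/
def rewFamAll (π : LaurentS n k →ₗ[k] LaurentS n k) (B : Set (Exp n)) :
    Set (LaurentS n k) :=
  {f | ∃ β ∈ bord B, f = mono k β - π (mono k β)}

/-- Indices of the basis `Y_i[m]` of the free module `S₁`: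
pairs of a signed index `(i,s)` and `m ∈ B` with `x_i m ∉ B`. -/
def GoodIdx (n : ℕ) (B : Set (Exp n)) : Type :=
  {q : (Fin n × Bool) × Exp n // q.2 ∈ B ∧ expOf n q.1.1 q.1.2 + q.2 ∉ B}

/-- The free `S`-module `S₁` with basis the `Y_i[m]`, `m ∈ B`, `x_i m ∉ B`. -/
abbrev S1 (n : ℕ) (k : Type*) [Field k] (B : Set (Exp n)) : Type _ :=
  GoodIdx n B →₀ LaurentS n k

open Classical in
/-- The basis element `Y_i[m]`, with the convention `Y_i[m] = 0` if `x_i m ∈ B`. -/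
def Ysym (k : Type*) [Field k] {n : ℕ} (B : Set (Exp n)) (i : Fin n) (s : Bool)
    (m : Exp n) : S1 n k B :=
  if h : m ∈ B ∧ expOf n i s + m ∉ B then Finsupp.single ⟨((i, s), m), h⟩ 1 else 0

/-- `k`-linear extension `b ↦ Y_i[b]` for `b ∈ ⟨B⟩`. -/
def YsymL (k : Type*) [Field k] {n : ℕ} (B : Set (Exp n)) (i : Fin n) (s : Bool)
    (b : LaurentS n k) : S1 n k B :=
  (b.coeff : Exp n →₀ k).sum fun m c => c • Ysym k B i s m

/-- `ψ_i(m) = x_i m − π(x_i m)` for a monomial `m`. -/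
def psiMono (π : LaurentS n k →ₗ[k] LaurentS n k) (i : Fin n) (s : Bool)
    (m : Exp n) : LaurentS n k :=
  mono k (expOf n i s + m) - π (mono k (expOf n i s + m))

/-- The `S`-module map `∂₁ : S₁ → S`, `Y_i[m] ↦ ψ_i(m)`. -/
def partial1 (π : LaurentS n k →ₗ[k] LaurentS n k) (B : Set (Exp n)) :
    S1 n k B →ₗ[LaurentS n k] LaurentS n k :=
  Finsupp.lsum (LaurentS n k) fun q =>
    LinearMap.toSpanSingleton (LaurentS n k) (LaurentS n k)
      (psiMono π q.1.1.1 q.1.1.2 q.1.2)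

/-- `φ_{i,j}(m) = x_i Y_j[m] − x_j Y_i[m] − Y_j[X_i(m)] + Y_i[X_j(m)]`. -/
def phiEl (π : LaurentS n k →ₗ[k] LaurentS n k) (B : Set (Exp n))
    (i : Fin n) (s : Bool) (j : Fin n) (t : Bool) (m : Exp n) : S1 n k B :=
  varX k i s • Ysym k B j t m - varX k j t • Ysym k B i s m
    - YsymL k B j t (Xop π i s (mono k m)) + YsymL k B i s (Xop π j t (mono k m))

/-- `ρ_i(m) = x_i Y_{−i}[m] + Y_i[X_{−i}(m)]`. -/
def rhoEl (π : LaurentS n k →ₗ[k] LaurentS n k) (B : Set (Exp n))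
    (i : Fin n) (s : Bool) (m : Exp n) : S1 n k B :=
  varX k i s • Ysym k B i (!s) m + YsymL k B i s (Xop π i (!s) (mono k m))

/-- The `S`-submodule `K₁ ⊆ S₁` generated by the `ρ_i(m)` and `φ_{i,j}(m)`, `m ∈ B`. -/
def K1 (π : LaurentS n k →ₗ[k] LaurentS n k) (B : Set (Exp n)) :
    Submodule (LaurentS n k) (S1 n k B) :=
  Submodule.span (LaurentS n k)
    ({u | ∃ i s m, m ∈ B ∧ u = rhoEl π B i s m} ∪
     {u | ∃ i s j t m, ((i, s) : Fin n × Bool) ≠ (j, t) ∧ m ∈ B ∧ u = phiEl π B i s j t m})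

/-- `X_{i₁} ∘ ⋯ ∘ X_{i_k}` for a sequence of signed indices. -/
def Xcomp (π : LaurentS n k →ₗ[k] LaurentS n k) :
    List (Fin n × Bool) → LaurentS n k →ₗ[k] LaurentS n k
  | [] => LinearMap.id
  | q :: L => (Xop π q.1 q.2) ∘ₗ Xcomp π L

/-- `Ψ_{i₁,…,i_k} = Σ_{l=1}^{k} x_{i₁}⋯x_{i_{l−1}} Y_{i_l}[X_{i_{l+1}} ∘ ⋯ ∘ X_{i_k}(1)]`. -/
def Psi (π : LaurentS n k →ₗ[k] LaurentS n k) (B : Set (Exp n)) :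
    List (Fin n × Bool) → S1 n k B
  | [] => 0
  | q :: L => YsymL k B q.1 q.2 (Xcomp π L 1) + varX k q.1 q.2 • Psi π B L

/-- Degree on `S₁`: max over the nonzero terms `m₁ Y_i[m₂]` of `δ(m₁)`
(`⊥` for the zero element). -/
def s1deg {B : Set (Exp n)} (u : S1 n k B) : WithBot ℕ :=
  u.support.sup fun q => (pdeg (u q) : WithBot ℕ)

end ToricBorderBasis

namespace ToricBorderBasis

section Aux

variable {k : Type*} [Field k] {n : ℕ}

lemma varX_mul_mono (i : Fin n) (s : Bool) (α : Exp n) :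
    varX k i s * mono k α = mono k (expOf n i s + α) := by
  simpa [varX, mono, AddMonoidAlgebra.ofCoeff_single] using
    AddMonoidAlgebra.single_mul_single (m₁ := expOf n i s) (r₁ := (1 : k))
      (m₂ := α) (r₂ := (1 : k))

lemma mono_mem_spanMon {A : Set (Exp n)} {α : Exp n} (hα : α ∈ A) :
    mono k α ∈ spanMon k A :=
  Submodule.subset_span ⟨α, hα, rfl⟩

lemma partial1_single (π : LaurentS n k →ₗ[k] LaurentS n k) (B : Set (Exp n))
    (q : GoodIdx n B) (c : LaurentS n k) :
    partial1 π B (Finsupp.single q c) = c * psiMono π q.1.1.1 q.1.1.2 q.1.2 := by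
  simp [partial1, LinearMap.toSpanSingleton, smul_eq_mul]

lemma partial1_Ysym (π : LaurentS n k →ₗ[k] LaurentS n k) {B : Set (Exp n)}
    (hπ : IsProj π B) (i : Fin n) (s : Bool) {m : Exp n} (hm : m ∈ B) :
    partial1 π B (Ysym k B i s m) = psiMono π i s m := by
  unfold Ysym
  split_ifs with h
  · exact (partial1_single π B ⟨((i, s), m), h⟩ 1).trans (one_mul _)
  · have hmem : expOf n i s + m ∈ B := by
      by_contra hc
      exact h ⟨hm, hc⟩
    have : π (mono k (expOf n i s + m)) = mono k (expOf n i s + m) :=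
      hπ.2 _ (mono_mem_spanMon hmem)
    simp [psiMono, this]

lemma YsymL_mono (B : Set (Exp n)) (i : Fin n) (s : Bool) (α : Exp n) :
    YsymL k B i s (mono k α) = Ysym k B i s α := by
  unfold YsymL
  rw [show (mono k α : LaurentS n k).coeff = Finsupp.single α 1 from rfl]
  rw [Finsupp.sum_single_index (by simp)]
  simp

lemma partial1_YsymL (π : LaurentS n k →ₗ[k] LaurentS n k) {B : Set (Exp n)}
    (hπ : IsProj π B) (i : Fin n) (s : Bool) {b : LaurentS n k}
    (hb : b ∈ spanMon k B) :
    partial1 π B (YsymL k B i s b) = varX k i s * b - Xop π i s b := by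
  refine Submodule.span_induction ?_ ?_ ?_ ?_ hb
  · rintro p ⟨α, hα, rfl⟩
    rw [YsymL_mono, partial1_Ysym π hπ i s hα]
    simp [psiMono, Xop, varX_mul_mono]
  · simp [YsymL]
  · intro x y hx hy ihx ihy
    have hadd : YsymL k B i s (x + y) = YsymL k B i s x + YsymL k B i s y := by
      unfold YsymL
      rw [AddMonoidAlgebra.coeff_add]
      exact Finsupp.sum_add_index (by simp) (by intros; rw [add_smul])
    rw [hadd, map_add, ihx, ihy, map_add]
    ring
  · intro c x hx ihx
    have hsmul : YsymL k B i s (c • x) = c • YsymL k B i s x := by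
      unfold YsymL
      rw [show (c • x : LaurentS n k).coeff = c • x.coeff from rfl]
      rw [Finsupp.sum_smul_index (by simp), Finsupp.smul_sum]
      simp [mul_smul]
    rw [hsmul, LinearMap.map_smul_of_tower, ihx, smul_sub, Algebra.mul_smul_comm]
    congr 1
    rw [map_smul]

end Aux

/-- For all `i ≠ j ∈ [−n,n]*` and `m ∈ B`, the element
`φ_{i,j}(m) = x_i Y_j[m] − x_j Y_i[m] − Y_j[X_i(m)] + Y_i[X_j(m)]` lies in `ker ∂₁`. -/
theorem statement_12 {n : ℕ} {k : Type*} [Field k]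
    (B : Set (Exp n)) (hBfin : B.Finite) (hB1 : ConnectedToOne B)
    (π : LaurentS n k →ₗ[k] LaurentS n k) (hπ : IsProj π B)
    (hcomm : CommRelAll π B) (hinv : InvRelAll π B) :
    ∀ (i : Fin n) (s : Bool) (j : Fin n) (t : Bool),
      ((i, s) : Fin n × Bool) ≠ (j, t) → ∀ m ∈ B,
      partial1 π B (phiEl π B i s j t m) = 0 := by
  intro i s j t _hne m hm
  have ha : mono k m ∈ spanMon k B := mono_mem_spanMon hm
  have hbx : ∀ (i : Fin n) (s : Bool),
      mono k (expOf n i s + m) ∈ spanMon k (Bx B) := fun i s =>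
    mono_mem_spanMon (Or.inr ⟨i, s, m, hm, rfl⟩)
  have hXi : Xop π i s (mono k m) ∈ spanMon k B := by
    simpa [Xop, varX_mul_mono] using hπ.1 _ (hbx i s)
  have hXj : Xop π j t (mono k m) ∈ spanMon k B := by
    simpa [Xop, varX_mul_mono] using hπ.1 _ (hbx j t)
  have hpsi : ∀ (i : Fin n) (s : Bool),
      psiMono π i s m = varX k i s * mono k m - Xop π i s (mono k m) := by
    intro i s
    simp [psiMono, Xop, varX_mul_mono]
  have hc := hcomm i s j t (mono k m) ha
  rw [phiEl, map_add, map_sub, map_sub, map_smul, map_smul,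
      partial1_Ysym π hπ j t hm, partial1_Ysym π hπ i s hm,
      partial1_YsymL π hπ j t hXi, partial1_YsymL π hπ i s hXj,
      hpsi, hpsi, smul_eq_mul, smul_eq_mul]
  linear_combination -hc

end ToricBorderBasis
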